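/- If A ∈ ℝ^{m×n} satisfies S-REC(S_{(a+b)l/2, G'}, 1-α, δ) and RIP(bl, α) for integers a, b, l > 0 with (a+b)l even, and α ∈ (0,1), then for every η with ‖Aη‖₂ ≤ ε, ‖η‖₂ ≤ (bl)^{-1/2}(C₀+1) σ_{al,G'}(η) + C₁ε + δ', where C₀ = (1+α)/(1-α), C₁ = 1/(1-α), δ' = δ/(1-α). -/

import Mathlib

noncomputable section

/-- The ℓ₂ norm of a vector in ℝⁿ. -/
def l2 {n : ℕ} (x : Fin n → ℝ) : ℝ := Real.sqrt (∑ i, (x i) ^ 2)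

/-- The ℓ₁ norm of a vector in ℝⁿ. -/
def l1 {n : ℕ} (x : Fin n → ℝ) : ℝ := ∑ i, |x i|

/-- The ℓ₀ "norm": number of nonzero coordinates. -/
def l0 {n : ℕ} (x : Fin n → ℝ) : ℕ := (Finset.univ.filter fun i => x i ≠ 0).card

/-- S_{j,G'} where G'(z₁,z₂) = G z₁ - G z₂ : vectors within j-sparse deviation
    of the range of the difference function. -/
def SjG' {n k : ℕ} (G : (Fin k → ℝ) → (Fin n → ℝ)) (j : ℕ) : Set (Fin n → ℝ) :=
  {w | ∃ z₁ z₂ : Fin k → ℝ, l0 (w - (G z₁ - G z₂)) ≤ j}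

/-- σ_T(x) = inf_{xh ∈ T} ‖x - xh‖₁. -/
def sigma' {n : ℕ} (T : Set (Fin n → ℝ)) (x : Fin n → ℝ) : ℝ :=
  sInf {d : ℝ | ∃ xh ∈ T, d = l1 (x - xh)}

section AuxLemmas

lemma l1_nonneg {n : ℕ} (x : Fin n → ℝ) : 0 ≤ l1 x :=
  Finset.sum_nonneg fun _ _ => abs_nonneg _

lemma l2_nonneg {n : ℕ} (x : Fin n → ℝ) : 0 ≤ l2 x := Real.sqrt_nonneg _

lemma l2_eq_norm {n : ℕ} (x : Fin n → ℝ) : l2 x = ‖(WithLp.equiv 2 (Fin n → ℝ)).symm x‖ := by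
  rw [EuclideanSpace.norm_eq]; simp [l2, sq_abs]

lemma l2_add_le {n : ℕ} (x y : Fin n → ℝ) : l2 (x + y) ≤ l2 x + l2 y := by
  simp only [l2_eq_norm, WithLp.equiv_symm_apply, WithLp.toLp_add]; exact norm_add_le _ _

lemma l2_sub_le {n : ℕ} (x y : Fin n → ℝ) : l2 (x - y) ≤ l2 x + l2 y := by
  simp only [l2_eq_norm, WithLp.equiv_symm_apply, WithLp.toLp_sub]; exact norm_sub_le _ _

lemma l2_sum_le {n : ℕ} {ι : Type*} (s : Finset ι) (f : ι → Fin n → ℝ) :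
    l2 (∑ t ∈ s, f t) ≤ ∑ t ∈ s, l2 (f t) := by
  classical
  induction s using Finset.induction with
  | empty => simp [l2]
  | insert _ _ h ih =>
    rw [Finset.sum_insert h, Finset.sum_insert h]
    exact (l2_add_le _ _).trans (by linarith)

lemma l0_neg {n : ℕ} (x : Fin n → ℝ) : l0 (-x) = l0 x := by
  unfold l0
  congr 1
  ext i
  simp

end AuxLemmas

namespace Stmt10Aux

variable {n : ℕ} (h : Fin n → ℝ) (σ : Equiv.Perm (Fin n))

/-- rank function -/
def r (i : Fin n) : ℕ := (σ i : ℕ)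

/-- restriction of `h` to ranks in `[p, q)` -/
def P (p q : ℕ) : Fin n → ℝ := fun i => if p ≤ r σ i ∧ r σ i < q then h i else 0

lemma r_lt (i : Fin n) : r σ i < n := (σ i).isLt

lemma r_inj : Function.Injective (r σ) := fun i j hij => σ.injective (Fin.ext hij)

lemma r_surj {q : ℕ} (hq : q < n) : ∃ i, r σ i = q := ⟨σ.symm ⟨q, hq⟩, by simp [r]⟩

lemma P_add {p q s : ℕ} (hpq : p ≤ q) (hqs : q ≤ s) :
    P h σ p q + P h σ q s = P h σ p s := by
  funext i
  simp only [Pi.add_apply, P]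
  rcases lt_or_ge (r σ i) q with hc | hc
  · rcases le_or_gt p (r σ i) with hp | hp
    · simp [hp, hc, hc.trans_le hqs, not_le.mpr hc]
    · simp [not_le.mpr hp, not_le.mpr hc]
  · rcases lt_or_ge (r σ i) s with hs | hs
    · simp [hc, hs, hpq.trans hc, not_lt.mpr hc]
    · simp [hc, not_lt.mpr hs, not_lt.mpr (hqs.trans hs)]

lemma P_self (p : ℕ) : P h σ p p = 0 := by
  funext i
  simp only [P, Pi.zero_apply]
  rw [if_neg]
  omega

lemma P_zero_top {q : ℕ} (hq : n ≤ q) : P h σ 0 q = h := by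
  funext i
  simp [P, (r_lt σ i).trans_le hq]

lemma l0_P_le (p q : ℕ) : l0 (P h σ p q) ≤ q - p := by
  have hsub : (Finset.univ.filter fun i => P h σ p q i ≠ 0) ⊆
      Finset.univ.filter fun i => p ≤ r σ i ∧ r σ i < q := by
    intro i hi
    simp only [Finset.mem_filter, Finset.mem_univ, true_and] at hi ⊢
    simp only [P] at hi
    by_contra hc
    exact hi (if_neg hc)
  calc l0 (P h σ p q) ≤ (Finset.univ.filter fun i => p ≤ r σ i ∧ r σ i < q).card :=
        Finset.card_le_card hsub
    _ ≤ (Finset.Ico p q).card := by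
        apply Finset.card_le_card_of_injOn (fun i => r σ i)
        · intro i hi
          simp only [Finset.mem_coe, Finset.mem_filter, Finset.mem_univ, true_and] at hi
          exact Finset.mem_Ico.mpr hi
        · exact fun i _ j _ hij => r_inj σ hij
    _ = q - p := Nat.card_Ico p q

lemma l1_P (p q : ℕ) :
    l1 (P h σ p q) = ∑ i ∈ Finset.univ.filter (fun i => p ≤ r σ i ∧ r σ i < q), |h i| := by
  rw [l1, ← Finset.sum_filter_add_sum_filter_not Finset.univ
    (fun i => p ≤ r σ i ∧ r σ i < q)]
  have h1 : ∀ i ∈ Finset.univ.filter (fun i => p ≤ r σ i ∧ r σ i < q),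
      |P h σ p q i| = |h i| := fun i hi => by
    simp only [Finset.mem_filter] at hi; simp [P, hi.2]
  have h2 : ∀ i ∈ Finset.univ.filter (fun i => ¬(p ≤ r σ i ∧ r σ i < q)),
      |P h σ p q i| = 0 := fun i hi => by
    simp only [Finset.mem_filter] at hi; simp [P, hi.2]
  rw [Finset.sum_congr rfl h1, Finset.sum_congr rfl h2]
  simp

lemma l2_P_sq (p q : ℕ) :
    l2 (P h σ p q) ^ 2 = ∑ i ∈ Finset.univ.filter (fun i => p ≤ r σ i ∧ r σ i < q), h i ^ 2 := by
  rw [l2, Real.sq_sqrt (by positivity)]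
  rw [← Finset.sum_filter_add_sum_filter_not Finset.univ (fun i => p ≤ r σ i ∧ r σ i < q)]
  have h1 : ∀ i ∈ Finset.univ.filter (fun i => p ≤ r σ i ∧ r σ i < q),
      P h σ p q i ^ 2 = h i ^ 2 := fun i hi => by
    simp only [Finset.mem_filter] at hi; simp [P, hi.2]
  have h2 : ∀ i ∈ Finset.univ.filter (fun i => ¬(p ≤ r σ i ∧ r σ i < q)),
      P h σ p q i ^ 2 = 0 := fun i hi => by
    simp only [Finset.mem_filter] at hi; simp [P, hi.2]
  rw [Finset.sum_congr rfl h1, Finset.sum_congr rfl h2]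
  simp

lemma card_filter_Ico (p q : ℕ) (hq : q ≤ n) :
    (Finset.univ.filter fun i => p ≤ r σ i ∧ r σ i < q).card = q - p := by
  rw [← Nat.card_Ico p q]
  apply Finset.card_bij (fun i _ => r σ i)
  · intro i hi
    simp only [Finset.mem_filter, Finset.mem_univ, true_and] at hi
    exact Finset.mem_Ico.mpr hi
  · intro i _ j _ hij
    exact r_inj σ hij
  · intro c hc
    rw [Finset.mem_Ico] at hc
    obtain ⟨i, hi⟩ := r_surj σ (hc.2.trans_le hq)
    exact ⟨i, by simp [hi, hc.1, hc.2], hi⟩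

lemma card_filter_le (p q : ℕ) :
    (Finset.univ.filter fun i => p ≤ r σ i ∧ r σ i < q).card ≤ q - p := by
  rw [← Nat.card_Ico p q]
  apply Finset.card_le_card_of_injOn (fun i => r σ i)
  · intro i hi
    simp only [Finset.mem_coe, Finset.mem_filter, Finset.mem_univ, true_and] at hi
    exact Finset.mem_Ico.mpr hi
  · exact fun i _ j _ hij => r_inj σ hij

lemma l1_P_add {p q s : ℕ} (hpq : p ≤ q) (hqs : q ≤ s) :
    l1 (P h σ p q) + l1 (P h σ q s) = l1 (P h σ p s) := by
  simp only [l1, ← Finset.sum_add_distrib]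
  apply Finset.sum_congr rfl
  intro i _
  simp only [P]
  by_cases h1 : p ≤ r σ i ∧ r σ i < q
  · have h2 : ¬(q ≤ r σ i ∧ r σ i < s) := by omega
    have h3 : p ≤ r σ i ∧ r σ i < s := by omega
    simp [h1, h2, h3]
  · by_cases h2 : q ≤ r σ i ∧ r σ i < s
    · have h3 : p ≤ r σ i ∧ r σ i < s := by omega
      simp [h1, h2, h3]
    · have h3 : ¬(p ≤ r σ i ∧ r σ i < s) := by omega
      simp [h1, h2, h3]

lemma sum_blocks_P (s0 B : ℕ) (N : ℕ) :
    ∑ t ∈ Finset.range N, P h σ (s0 + t * B) (s0 + t * B + B) = P h σ s0 (s0 + N * B) := by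
  induction N with
  | zero => simp [P_self]
  | succ N ih =>
    rw [Finset.sum_range_succ, ih, Nat.succ_mul, ← add_assoc]
    exact P_add h σ (Nat.le_add_right _ _) (Nat.le_add_right _ _)

lemma l1_sum_blocks (s0 B : ℕ) (N : ℕ) :
    ∑ t ∈ Finset.range N, l1 (P h σ (s0 + t * B) (s0 + t * B + B))
      = l1 (P h σ s0 (s0 + N * B)) := by
  induction N with
  | zero => simp [P_self, l1]
  | succ N ih =>
    rw [Finset.sum_range_succ, ih, Nat.succ_mul, ← add_assoc]
    exact l1_P_add h σ (Nat.le_add_right _ _) (Nat.le_add_right _ _)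

lemma block_bound {B p : ℕ} (hB : 0 < B)
    (hsort : ∀ i j : Fin n, r σ i ≤ r σ j → |h j| ≤ |h i|) (hBp : B ≤ p) :
    l2 (P h σ p (p + B)) ≤ (Real.sqrt B)⁻¹ * l1 (P h σ (p - B) p) := by
  have hBR : (0:ℝ) < Real.sqrt B := Real.sqrt_pos.mpr (by exact_mod_cast hB)
  set Q := Finset.univ.filter fun i => p ≤ r σ i ∧ r σ i < p + B with hQdef
  rcases Q.eq_empty_or_nonempty with hQ | ⟨i₀, hi₀⟩
  · have hz : l2 (P h σ p (p + B)) ^ 2 = 0 := by rw [l2_P_sq, ← hQdef, hQ]; simp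
    have h0 : l2 (P h σ p (p + B)) = 0 := sq_eq_zero_iff.mp hz
    rw [h0]
    exact mul_nonneg (by positivity) (l1_nonneg _)
  · simp only [hQdef, Finset.mem_filter, Finset.mem_univ, true_and] at hi₀
    have hpn : p < n := lt_of_le_of_lt hi₀.1 (r_lt σ i₀)
    obtain ⟨i₁, hi₁⟩ := r_surj σ hpn
    set M := |h i₁| with hM
    have hM0 : 0 ≤ M := abs_nonneg _
    have hl2 : l2 (P h σ p (p + B)) ≤ Real.sqrt B * M := by
      have hsq : l2 (P h σ p (p + B)) ^ 2 ≤ B * M ^ 2 := by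
        rw [l2_P_sq]
        calc ∑ i ∈ Q, h i ^ 2 ≤ ∑ _i ∈ Q, M ^ 2 := by
              apply Finset.sum_le_sum
              intro i hi
              simp only [hQdef, Finset.mem_filter, Finset.mem_univ, true_and] at hi
              have habs : |h i| ≤ M := hsort i₁ i (by omega)
              calc h i ^ 2 = |h i| ^ 2 := (sq_abs _).symm
                _ ≤ M ^ 2 := by nlinarith [abs_nonneg (h i)]
          _ = Q.card * M ^ 2 := by rw [Finset.sum_const, nsmul_eq_mul]
          _ ≤ B * M ^ 2 := by
              have hcard : Q.card ≤ B := by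
                have := card_filter_le σ p (p + B)
                simp only [← hQdef] at this
                omega
              have hc : (Q.card : ℝ) ≤ B := by exact_mod_cast hcard
              nlinarith [sq_nonneg M]
      calc l2 (P h σ p (p + B)) = Real.sqrt (l2 (P h σ p (p + B)) ^ 2) := by
            rw [Real.sqrt_sq (l2_nonneg _)]
        _ ≤ Real.sqrt (B * M ^ 2) := Real.sqrt_le_sqrt hsq
        _ = Real.sqrt B * M := by
            rw [Real.sqrt_mul (by positivity), Real.sqrt_sq hM0]
    have hl1 : (B : ℝ) * M ≤ l1 (P h σ (p - B) p) := by
      rw [l1_P]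
      set R := Finset.univ.filter fun i => p - B ≤ r σ i ∧ r σ i < p with hRdef
      have hRcard : R.card = B := by
        have := card_filter_Ico σ (p - B) p (le_of_lt hpn)
        rw [← hRdef] at this
        omega
      calc (B : ℝ) * M = R.card • M := by rw [hRcard, nsmul_eq_mul]
        _ ≤ ∑ i ∈ R, |h i| := by
            apply Finset.card_nsmul_le_sum
            intro i hi
            simp only [hRdef, Finset.mem_filter, Finset.mem_univ, true_and] at hi
            exact hsort i i₁ (by omega)
    have h1 : (Real.sqrt B)⁻¹ * ((B:ℝ) * M) ≤ (Real.sqrt B)⁻¹ * l1 (P h σ (p - B) p) :=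
      mul_le_mul_of_nonneg_left hl1 (by positivity)
    have h2 : (Real.sqrt B)⁻¹ * ((B:ℝ) * M) = Real.sqrt B * M := by
      have hBB : Real.sqrt B * Real.sqrt B = (B:ℝ) := Real.mul_self_sqrt (by positivity)
      field_simp
      linear_combination (-M) * hBB
    linarith

lemma sigma_bound (hsort : ∀ i j : Fin n, r σ i ≤ r σ j → |h j| ≤ |h i|) (v : Fin n → ℝ)
    {s q : ℕ} (hv : l0 v ≤ s) (hq : n ≤ q) :
    l1 (P h σ s q) ≤ l1 (h - v) := by
  classical
  rcases le_or_gt n s with hns | hsn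
  · have hz : l1 (P h σ s q) = 0 := by
      rw [l1_P]
      apply Finset.sum_eq_zero
      intro i hi
      simp only [Finset.mem_filter, Finset.mem_univ, true_and] at hi
      exact absurd hi.1 (by have := r_lt σ i; omega)
    rw [hz]; exact l1_nonneg _
  · set S := Finset.univ.filter (fun i => v i ≠ 0) with hSdef
    set T := Finset.univ.filter (fun i : Fin n => r σ i < s) with hTdef
    have hTcard : T.card = s := by
      have := card_filter_Ico σ 0 s (le_of_lt hsn)
      simpa [hTdef] using this
    have hScard : S.card ≤ s := hv
    have hTc : (Finset.univ.filter fun i => s ≤ r σ i ∧ r σ i < q)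
        = Finset.univ.filter (fun i => ¬ (r σ i < s)) := by
      ext i
      simp only [Finset.mem_filter, Finset.mem_univ, true_and, not_lt]
      have := r_lt σ i
      omega
    rw [l1_P, hTc]
    rw [← Finset.sum_filter_add_sum_filter_not
      (Finset.univ.filter (fun i => ¬ (r σ i < s))) (fun i => v i = 0) (fun i => |h i|)]
    have hrhs : ∑ i ∈ Finset.univ.filter (fun i => v i = 0), |h i| ≤ l1 (h - v) := by
      rw [l1, ← Finset.sum_filter_add_sum_filter_not Finset.univ (fun i => v i = 0)
        (fun i => |(h - v) i|)]
      have e1 : ∑ i ∈ Finset.univ.filter (fun i => v i = 0), |(h - v) i|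
          = ∑ i ∈ Finset.univ.filter (fun i => v i = 0), |h i| := by
        apply Finset.sum_congr rfl
        intro i hi
        simp only [Finset.mem_filter, Finset.mem_univ, true_and] at hi
        simp [Pi.sub_apply, hi]
      rw [e1]
      have hpos : 0 ≤ ∑ i ∈ Finset.univ.filter (fun i => ¬ v i = 0), |(h - v) i| :=
        Finset.sum_nonneg fun i _ => abs_nonneg _
      linarith
    refine le_trans ?_ hrhs
    rw [← Finset.sum_filter_add_sum_filter_not
      (Finset.univ.filter (fun i => v i = 0)) (fun i => r σ i < s) (fun i => |h i|)]
    have hsame : (Finset.univ.filter fun i => ¬ (r σ i < s)).filter (fun i => v i = 0)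
        = (Finset.univ.filter fun i => v i = 0).filter (fun i => ¬ (r σ i < s)) := by
      ext i; simp only [Finset.mem_filter, Finset.mem_univ, true_and]; tauto
    rw [hsame]
    have hF : ∑ i ∈ (Finset.univ.filter fun i => ¬ (r σ i < s)).filter (fun i => ¬ v i = 0), |h i|
        ≤ ∑ i ∈ (Finset.univ.filter fun i => v i = 0).filter (fun i => r σ i < s), |h i| := by
      set F1 := (Finset.univ.filter fun i : Fin n => ¬ (r σ i < s)).filter (fun i => ¬ v i = 0)
        with hF1def
      set F2 := (Finset.univ.filter fun i : Fin n => v i = 0).filter (fun i => r σ i < s)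
        with hF2def
      have hF1eq : F1 = S \ T := by
        ext i
        simp only [hF1def, hSdef, hTdef, Finset.mem_filter, Finset.mem_sdiff,
          Finset.mem_univ, true_and]
        tauto
      have hF2eq : F2 = T \ S := by
        ext i
        simp only [hF2def, hSdef, hTdef, Finset.mem_filter, Finset.mem_sdiff,
          Finset.mem_univ, true_and]
        tauto
      have hc1 : (S \ T).card + (S ∩ T).card = S.card := Finset.card_sdiff_add_card_inter S T
      have hc2 : (T \ S).card + (T ∩ S).card = T.card := Finset.card_sdiff_add_card_inter T S
      have hci : (S ∩ T).card = (T ∩ S).card := by rw [Finset.inter_comm]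
      have hcard : F1.card ≤ F2.card := by
        rw [hF1eq, hF2eq]; omega
      rcases F1.eq_empty_or_nonempty with hF1 | hF1ne
      · rw [hF1]; simp
        exact Finset.sum_nonneg fun i _ => abs_nonneg _
      · have hF2ne : F2.Nonempty := by
          rw [← Finset.card_pos] at hF1ne ⊢; omega
        obtain ⟨i₂, hi₂, hmin⟩ := F2.exists_min_image (fun i => |h i|) hF2ne
        have hle : ∀ i ∈ F1, |h i| ≤ |h i₂| := by
          intro i hi
          simp only [hF1def, Finset.mem_filter, Finset.mem_univ, true_and] at hi
          have hi₂' := hi₂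
          simp only [hF2def, Finset.mem_filter, Finset.mem_univ, true_and] at hi₂'
          exact hsort i₂ i (by omega)
        calc ∑ i ∈ F1, |h i| ≤ F1.card • |h i₂| := Finset.sum_le_card_nsmul F1 _ _ hle
          _ ≤ F2.card • |h i₂| := nsmul_le_nsmul_left (abs_nonneg _) hcard
          _ ≤ ∑ i ∈ F2, |h i| := Finset.card_nsmul_le_sum F2 _ _ hmin
    linarith [hF]

end Stmt10Aux

open Stmt10Aux in
/-- main theorem -/
theorem stmt10 {m n k : ℕ} (a b l : ℕ) (ha : 0 < a) (hb : 0 < b) (hl : 0 < l)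
    (heven : Even ((a + b) * l))
    (A : Matrix (Fin m) (Fin n) ℝ) (G : (Fin k → ℝ) → (Fin n → ℝ))
    (α δ ε : ℝ) (hα : α ∈ Set.Ioo (0 : ℝ) 1) (hδ : 0 ≤ δ) (hε : 0 ≤ ε)
    (hSREC : ∀ x₁ ∈ SjG' G ((a + b) * l / 2), ∀ x₂ ∈ SjG' G ((a + b) * l / 2),
      l2 (A.mulVec (x₁ - x₂)) ≥ (1 - α) * l2 (x₁ - x₂) - δ)
    (hRIP : ∀ x : Fin n → ℝ, l0 x ≤ b * l →
      (1 - α) * l2 x ≤ l2 (A.mulVec x) ∧ l2 (A.mulVec x) ≤ (1 + α) * l2 x) :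
    ∀ η : Fin n → ℝ, l2 (A.mulVec η) ≤ ε →
      l2 η ≤ (Real.sqrt (b * l))⁻¹ * ((1 + α) / (1 - α) + 1) * sigma' (SjG' G (a * l)) η
        + (1 / (1 - α)) * ε + δ / (1 - α) := by
  classical
  obtain ⟨hα0, hα1⟩ := hα
  have h1α : (0:ℝ) < 1 - α := by linarith
  intro η hη
  have hBpos : 0 < b * l := Nat.mul_pos hb hl
  have hBcast : (((b * l : ℕ)) : ℝ) = (b : ℝ) * (l : ℝ) := by push_cast; ring
  have hBR : (0:ℝ) < Real.sqrt ((b : ℝ) * (l : ℝ)) := by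
    rw [← hBcast]
    exact Real.sqrt_pos.mpr (by exact_mod_cast hBpos)
  -- key pointwise bound
  have key : ∀ ηh ∈ SjG' G (a * l),
      l2 η ≤ (Real.sqrt ((b : ℝ) * (l : ℝ)))⁻¹ * ((1 + α) / (1 - α) + 1) * l1 (η - ηh)
        + (1 / (1 - α)) * ε + δ / (1 - α) := by
    rintro ηh ⟨z₁, z₂, hv0⟩
    set h := η - (G z₁ - G z₂) with hhdef
    set v := ηh - (G z₁ - G z₂) with hvdef
    have hηηh : η - ηh = h - v := by rw [hhdef, hvdef]; abel
    set π := Tuple.sort (fun i => -|h i|) with hπdef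
    set σ := π.symm with hσdef
    have hsort : ∀ i j : Fin n, r σ i ≤ r σ j → |h j| ≤ |h i| := by
      intro i j hij
      have hmono := Tuple.monotone_sort (fun i => -|h i|)
      have hle : σ i ≤ σ j := by rwa [Fin.le_def]
      have hm := hmono hle
      simp only [Function.comp_apply, hσdef, ← hπdef, Equiv.apply_symm_apply] at hm
      linarith
    set K := a * l with hKdef
    set B := b * l with hBdef
    set s0 := K + B with hs0def
    set c2 := (a + b) * l / 2 with hc2def
    have habl : (a + b) * l = K + B := by rw [hKdef, hBdef]; ring
    have hc2two : c2 * 2 = (a + b) * l := Nat.div_two_mul_two_of_even heven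
    have hs0c2 : s0 = 2 * c2 := by omega
    set x := (G z₁ - G z₂) + P h σ 0 s0 with hxdef
    set tails : ℕ → (Fin n → ℝ) := fun t => P h σ (s0 + t * B) (s0 + t * B + B) with htldef
    have hnle : n ≤ s0 + n * B := by
      have h1 : n ≤ n * B := Nat.le_mul_of_pos_right n hBpos
      omega
    -- decomposition
    have hdecomp : η = x + ∑ t ∈ Finset.range n, tails t := by
      have h1 : ∑ t ∈ Finset.range n, tails t = P h σ s0 (s0 + n * B) :=
        sum_blocks_P h σ s0 B n
      have h2 : P h σ 0 s0 + P h σ s0 (s0 + n * B) = P h σ 0 (s0 + n * B) :=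
        P_add h σ (Nat.zero_le _) (Nat.le_add_right _ _)
      have h3 : P h σ 0 (s0 + n * B) = h := P_zero_top h σ hnle
      rw [h1, hxdef, add_assoc, h2, h3, hhdef]
      abel
    -- S-REC applied to the head
    have hx1mem : ((G z₁ - G z₂) + P h σ 0 c2) ∈ SjG' G ((a + b) * l / 2) := by
      refine ⟨z₁, z₂, ?_⟩
      have e : (G z₁ - G z₂) + P h σ 0 c2 - (G z₁ - G z₂) = P h σ 0 c2 := by abel
      rw [e]
      exact le_trans (l0_P_le h σ 0 c2) (by omega)
    have hx2mem : (-(P h σ c2 s0)) ∈ SjG' G ((a + b) * l / 2) := by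
      refine ⟨0, 0, ?_⟩
      have e : (-(P h σ c2 s0)) - (G 0 - G 0) = -(P h σ c2 s0) := by
        rw [sub_self, sub_zero]
      rw [e, l0_neg]
      exact le_trans (l0_P_le h σ c2 s0) (by omega)
    have hxdiff : (G z₁ - G z₂) + P h σ 0 c2 - (-(P h σ c2 s0)) = x := by
      rw [hxdef, ← P_add h σ (show 0 ≤ c2 by omega) (show c2 ≤ s0 by omega)]
      abel
    have hsrec := hSREC _ hx1mem _ hx2mem
    rw [hxdiff] at hsrec
    -- mulVec decomposition
    have hmv : A.mulVec x = A.mulVec η - ∑ t ∈ Finset.range n, A.mulVec (tails t) := by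
      have h1 : A.mulVec η = A.mulVec x + A.mulVec (∑ t ∈ Finset.range n, tails t) := by
        rw [← Matrix.mulVec_add, ← hdecomp]
      have h2 : A.mulVec (∑ t ∈ Finset.range n, tails t)
          = ∑ t ∈ Finset.range n, A.mulVec (tails t) := by
        have h2' := map_sum (Matrix.mulVecLin A) tails (Finset.range n)
        simp only [Matrix.mulVecLin_apply] at h2'
        exact h2'
      rw [h2] at h1
      rw [h1]
      abel
    -- RIP on the tails
    have hl0tail : ∀ t, l0 (tails t) ≤ B := by
      intro t
      have := l0_P_le h σ (s0 + t * B) (s0 + t * B + B)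
      rwa [Nat.add_sub_cancel_left] at this
    set T := ∑ t ∈ Finset.range n, l2 (tails t) with hTdef
    have hT0 : 0 ≤ T := Finset.sum_nonneg fun t _ => l2_nonneg _
    have hAx : l2 (A.mulVec x) ≤ ε + (1 + α) * T := by
      rw [hmv]
      have s1 : l2 (A.mulVec η - ∑ t ∈ Finset.range n, A.mulVec (tails t))
          ≤ l2 (A.mulVec η) + l2 (∑ t ∈ Finset.range n, A.mulVec (tails t)) := l2_sub_le _ _
      have s2 : l2 (∑ t ∈ Finset.range n, A.mulVec (tails t))
          ≤ ∑ t ∈ Finset.range n, l2 (A.mulVec (tails t)) := l2_sum_le _ _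
      have s3 : ∑ t ∈ Finset.range n, l2 (A.mulVec (tails t))
          ≤ ∑ t ∈ Finset.range n, (1 + α) * l2 (tails t) :=
        Finset.sum_le_sum fun t _ => (hRIP (tails t) (hl0tail t)).2
      have s4 : ∑ t ∈ Finset.range n, (1 + α) * l2 (tails t) = (1 + α) * T := by
        rw [hTdef, Finset.mul_sum]
      linarith
    -- tail block bound
    have htail : T ≤ (Real.sqrt (B : ℝ))⁻¹ * l1 (h - v) := by
      have h1 : ∀ t ∈ Finset.range n,
          l2 (tails t) ≤ (Real.sqrt (B : ℝ))⁻¹ * l1 (P h σ (K + t * B) (K + t * B + B)) := by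
        intro t _
        have hBp : B ≤ s0 + t * B := le_trans (Nat.le_add_left B K) (Nat.le_add_right _ _)
        have hbb := block_bound h σ hBpos hsort hBp
        have heq : ∀ u : ℕ, K + B + u - B = K + u := fun u => by omega
        have heq2 : s0 + t * B - B = K + t * B := by rw [hs0def]; exact heq (t * B)
        rw [heq2] at hbb
        have heq3 : K + t * B + B = s0 + t * B := by rw [hs0def]; ring
        simp only [htldef]
        rw [heq3]
        exact hbb
      have h2 : T ≤ (Real.sqrt (B : ℝ))⁻¹
          * ∑ t ∈ Finset.range n, l1 (P h σ (K + t * B) (K + t * B + B)) := by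
        rw [Finset.mul_sum]
        exact Finset.sum_le_sum h1
      have h3 : ∑ t ∈ Finset.range n, l1 (P h σ (K + t * B) (K + t * B + B))
          = l1 (P h σ K (K + n * B)) := l1_sum_blocks h σ K B n
      have h4 : l1 (P h σ K (K + n * B)) ≤ l1 (h - v) := by
        apply sigma_bound h σ hsort v hv0
        have h5 : n ≤ n * B := Nat.le_mul_of_pos_right n hBpos
        omega
      calc T ≤ (Real.sqrt (B : ℝ))⁻¹
            * ∑ t ∈ Finset.range n, l1 (P h σ (K + t * B) (K + t * B + B)) := h2
        _ = (Real.sqrt (B : ℝ))⁻¹ * l1 (P h σ K (K + n * B)) := by rw [h3]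
        _ ≤ (Real.sqrt (B : ℝ))⁻¹ * l1 (h - v) :=
            mul_le_mul_of_nonneg_left h4 (by positivity)
    -- assemble
    have hηx : l2 η ≤ l2 x + T := by
      rw [hdecomp]
      exact le_trans (l2_add_le _ _) (by
        have := l2_sum_le (Finset.range n) tails
        linarith)
    have hxb : l2 x * (1 - α) ≤ ε + (1 + α) * T + δ := by nlinarith [hsrec, hAx]
    have hS0 : 0 ≤ l1 (h - v) := l1_nonneg _
    have hβ : (Real.sqrt ((b : ℝ) * (l : ℝ)))⁻¹ = (Real.sqrt ((B : ℕ) : ℝ))⁻¹ := by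
      rw [hBdef, hBcast]
    rw [hηηh, hβ]
    have hβ0 : (0:ℝ) < (Real.sqrt ((B : ℕ) : ℝ))⁻¹ := by
      rw [← hβ]; positivity
    have hcoef : (0:ℝ) ≤ (1 + α) / (1 - α) + 1 := by
      have := div_nonneg (show (0:ℝ) ≤ 1 + α by linarith) h1α.le
      linarith
    have hfinal : l2 η ≤ ((1 + α) / (1 - α) + 1) * T + (1 / (1 - α)) * ε + δ / (1 - α) := by
      have hxle : l2 x ≤ (ε + (1 + α) * T + δ) / (1 - α) := by
        rw [le_div_iff₀ h1α]
        linarith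
      have hrw : (ε + (1 + α) * T + δ) / (1 - α) + T
          = ((1 + α) / (1 - α) + 1) * T + (1 / (1 - α)) * ε + δ / (1 - α) := by
        field_simp
        ring
      linarith [hηx, hxle, hrw.le, hrw.ge]
    have hTle : ((1 + α) / (1 - α) + 1) * T
        ≤ ((1 + α) / (1 - α) + 1) * ((Real.sqrt ((B : ℕ) : ℝ))⁻¹ * l1 (h - v)) :=
      mul_le_mul_of_nonneg_left htail hcoef
    calc l2 η ≤ ((1 + α) / (1 - α) + 1) * T + (1 / (1 - α)) * ε + δ / (1 - α) := hfinal
      _ ≤ ((1 + α) / (1 - α) + 1) * ((Real.sqrt ((B : ℕ) : ℝ))⁻¹ * l1 (h - v))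
            + (1 / (1 - α)) * ε + δ / (1 - α) := by linarith
      _ = (Real.sqrt ((B : ℕ) : ℝ))⁻¹ * ((1 + α) / (1 - α) + 1) * l1 (h - v)
            + (1 / (1 - α)) * ε + δ / (1 - α) := by ring
  -- conclude via the infimum
  set c := (Real.sqrt ((b : ℝ) * (l : ℝ)))⁻¹ * ((1 + α) / (1 - α) + 1) with hcdef
  have hc0 : 0 < c := by
    apply mul_pos (inv_pos.mpr hBR)
    have := div_nonneg (show (0:ℝ) ≤ 1 + α by linarith) h1α.le
    linarith
  set E := (1 / (1 - α)) * ε + δ / (1 - α) with hEdef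
  set D := {d : ℝ | ∃ xh ∈ SjG' G (a * l), d = l1 (η - xh)} with hDdef
  have hmem0 : (0 : Fin n → ℝ) ∈ SjG' G (a * l) := by
    refine ⟨0, 0, ?_⟩
    have e : (0 : Fin n → ℝ) - (G 0 - G 0) = 0 := by
      rw [sub_self, sub_zero]
    rw [e]
    simp [l0]
  have hne : D.Nonempty := ⟨l1 (η - 0), 0, hmem0, rfl⟩
  have hlow : ∀ d ∈ D, (l2 η - E) / c ≤ d := by
    rintro d ⟨xh, hxh, rfl⟩
    rw [div_le_iff₀ hc0]
    have hk := key xh hxh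
    rw [hEdef]
    nlinarith [hk]
  have hinf : (l2 η - E) / c ≤ sInf D := le_csInf hne hlow
  have hσ : sigma' (SjG' G (a * l)) η = sInf D := rfl
  rw [div_le_iff₀ hc0] at hinf
  have hgoal : l2 η ≤ c * sInf D + E := by nlinarith [hinf]
  rw [hσ]
  rw [hEdef] at hgoal
  calc l2 η ≤ c * sInf D + ((1 / (1 - α)) * ε + δ / (1 - α)) := hgoal
    _ = c * sInf D + (1 / (1 - α)) * ε + δ / (1 - α) := by ring
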